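/- Let a_t, b_t, c_t be the bridge coefficients with SNR_T/SNR_t → 0. Then a_t → 0, b_t/α_t → 1, and c_t/σ_t → 1; moreover the deterministic DBIM step x_s = (c_s/c_t) x_t + (a_s − (c_s/c_t) a_t) x_T + (b_s − (c_s/c_t) b_t) x̂ converges to the DDIM step x_s = (σ_s/σ_t) x_t + σ_s (α_s/σ_s − α_t/σ_t) x̂ in the limit SNR_T → 0 (with s, t and α, σ at s, t fixed). -/

import Mathlib

open Filter Topology

/-- DBIM recovers DDIM in the limit `SNR_T → 0⁺`: `a_t → 0`, `b_t/α_t → 1`, `c_t/σ_t → 1`,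
and the deterministic DBIM step converges to the DDIM step. -/
theorem dbim_to_ddim_limit (d : ℕ) (αt σt αs σs αT : ℝ)
    (hαt : 0 < αt) (hσt : 0 < σt) (hαs : 0 < αs) (hσs : 0 < σs) (hαT : 0 < αT)
    (St Ss : ℝ) (hSt : St = αt ^ 2 / σt ^ 2) (hSs : Ss = αs ^ 2 / σs ^ 2)
    (a b c : ℝ → ℝ → ℝ → ℝ)  -- (α, σ², ...) abbreviations specialized below
    (ha : ∀ α' S' ST, a α' S' ST = (α' / αT) * (ST / S'))
    (hb : ∀ α' S' ST, b α' S' ST = α' * (1 - ST / S'))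
    (hc : ∀ σ' S' ST, c σ' S' ST = σ' * Real.sqrt (1 - ST / S'))
    (xt xT xhat : Fin d → ℝ) :
    Tendsto (fun ST => a αt St ST) (nhdsWithin 0 (Set.Ioi 0)) (nhds 0) ∧
    Tendsto (fun ST => b αt St ST / αt) (nhdsWithin 0 (Set.Ioi 0)) (nhds 1) ∧
    Tendsto (fun ST => c σt St ST / σt) (nhdsWithin 0 (Set.Ioi 0)) (nhds 1) ∧
    Tendsto (fun ST =>
        (c σs Ss ST / c σt St ST) • xt
        + (a αs Ss ST - (c σs Ss ST / c σt St ST) * a αt St ST) • xT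
        + (b αs Ss ST - (c σs Ss ST / c σt St ST) * b αt St ST) • xhat)
      (nhdsWithin 0 (Set.Ioi 0))
      (nhds ((σs / σt) • xt + (σs * (αs / σs - αt / σt)) • xhat)) := by
  have hSt' : (0:ℝ) < St := by rw [hSt]; positivity
  have hSs' : (0:ℝ) < Ss := by rw [hSs]; positivity
  have cdiv : ∀ S : ℝ, 0 < S → ContinuousAt (fun ST : ℝ => ST / S) 0 := fun S hS =>
    continuousAt_id.div continuousAt_const hS.ne'
  have csqrt : ∀ S : ℝ, 0 < S → ContinuousAt (fun ST : ℝ => Real.sqrt (1 - ST / S)) 0 :=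
    fun S hS => Real.continuous_sqrt.continuousAt.comp
      (continuousAt_const.sub (cdiv S hS))
  have cA : ∀ α' S, 0 < S → ContinuousAt (fun ST => a α' S ST) 0 := by
    intro α' S hS
    simp only [ha]
    exact continuousAt_const.mul (cdiv S hS)
  have cB : ∀ α' S, 0 < S → ContinuousAt (fun ST => b α' S ST) 0 := by
    intro α' S hS
    simp only [hb]
    exact continuousAt_const.mul (continuousAt_const.sub (cdiv S hS))
  have cC : ∀ σ' S, 0 < S → ContinuousAt (fun ST => c σ' S ST) 0 := by
    intro σ' S hS
    simp only [hc]
    exact continuousAt_const.mul (csqrt S hS)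
  have hA0 : ∀ α' S, a α' S 0 = 0 := by intro α' S; simp [ha]
  have hB0 : ∀ α', b α' St 0 = α' := by intro α'; simp [hb]
  have hB0' : ∀ α', b α' Ss 0 = α' := by intro α'; simp [hb]
  have hC0 : ∀ σ', c σ' St 0 = σ' := by intro σ'; simp [hc]
  have hC0' : ∀ σ', c σ' Ss 0 = σ' := by intro σ'; simp [hc]
  refine ⟨?_, ?_, ?_, ?_⟩
  · have h := ((cA αt St hSt').tendsto).mono_left (nhdsWithin_le_nhds (s := Set.Ioi (0:ℝ)))
    rwa [hA0] at h
  · have h := (((cB αt St hSt').div continuousAt_const hαt.ne').tendsto).mono_left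
      (nhdsWithin_le_nhds (s := Set.Ioi (0:ℝ)))
    simpa [hB0, div_self hαt.ne', Pi.div_def] using h
  · have h := (((cC σt St hSt').div continuousAt_const hσt.ne').tendsto).mono_left
      (nhdsWithin_le_nhds (s := Set.Ioi (0:ℝ)))
    simpa [hC0, div_self hσt.ne', Pi.div_def] using h
  · have hct0 : c σt St 0 ≠ 0 := by rw [hC0]; exact hσt.ne'
    have cR : ContinuousAt (fun ST => c σs Ss ST / c σt St ST) 0 :=
      (cC σs Ss hSs').div (cC σt St hSt') hct0
    have h : ContinuousAt (fun ST =>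
        (c σs Ss ST / c σt St ST) • xt
        + (a αs Ss ST - (c σs Ss ST / c σt St ST) * a αt St ST) • xT
        + (b αs Ss ST - (c σs Ss ST / c σt St ST) * b αt St ST) • xhat) 0 :=
      ((cR.smul continuousAt_const).add
        (((cA αs Ss hSs').sub (cR.mul (cA αt St hSt'))).smul continuousAt_const)).add
        (((cB αs Ss hSs').sub (cR.mul (cB αt St hSt'))).smul continuousAt_const)
    have h2 := (h.tendsto).mono_left (nhdsWithin_le_nhds (s := Set.Ioi (0:ℝ)))
    have hval : (c σs Ss 0 / c σt St 0) • xt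
        + (a αs Ss 0 - (c σs Ss 0 / c σt St 0) * a αt St 0) • xT
        + (b αs Ss 0 - (c σs Ss 0 / c σt St 0) * b αt St 0) • xhat
        = (σs / σt) • xt + (σs * (αs / σs - αt / σt)) • xhat := by
      rw [hC0, hC0', hA0, hA0, hB0, hB0']
      have : αs - σs / σt * αt = σs * (αs / σs - αt / σt) := by
        field_simp
      simp [this]
    rwa [hval] at h2
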